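/- arXiv:1212.1247 — 3 statements merged into one kernel-verified Lean document; each statement's English description precedes it below -/
import Mathlib

section
/- Let A, B be m×n real matrices with SVD A = Σ σ_i x_i y_i^T, singular values in decreasing order, and let S = {i : σ_i > (1+δ)‖A−B‖} for some δ > 0. Then |S| ≤ ‖B‖_* / (δ·‖A−B‖), provided ‖A−B‖ > 0. -/
noncomputable def singularValues {m n : ℕ} (A : Matrix (Fin m) (Fin n) ℝ) : Fin n → ℝ :=
  fun i => Real.sqrt ((Matrix.isHermitian_conjTranspose_mul_self A).eigenvalues i)

noncomputable def nuclearNorm {m n : ℕ} (A : Matrix (Fin m) (Fin n) ℝ) : ℝ :=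
  ∑ i, singularValues A i

noncomputable def frobeniusNorm {m n : ℕ} (A : Matrix (Fin m) (Fin n) ℝ) : ℝ :=
  Real.sqrt (∑ i, ∑ j, (A i j)^2)

noncomputable def spectralNorm' {m n : ℕ} (A : Matrix (Fin m) (Fin n) ℝ) : ℝ :=
  ⨆ i, singularValues A i

section aux
open Matrix Finset
variable {k : ℕ}

private lemma inner_eq_dot (x y : EuclideanSpace ℝ (Fin k)) :
    (inner ℝ x y : ℝ) = dotProduct ((WithLp.equiv 2 _) x) ((WithLp.equiv 2 _) y) := by
  simp [PiLp.inner_apply, dotProduct, RCLike.inner_apply, mul_comm]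

private lemma dot_self_nonneg' (w : Fin k → ℝ) : 0 ≤ w ⬝ᵥ w :=
  Finset.sum_nonneg fun _ _ => mul_self_nonneg _

private lemma sum_dot {ι : Type*} (s : Finset ι) (f : ι → Fin k → ℝ) (w : Fin k → ℝ) :
    (∑ i ∈ s, f i) ⬝ᵥ w = ∑ i ∈ s, f i ⬝ᵥ w := by
  simp [dotProduct, Finset.sum_mul]
  exact Finset.sum_comm

private lemma dot_expand (b : OrthonormalBasis (Fin k) ℝ (EuclideanSpace ℝ (Fin k)))
    (x y : Fin k → ℝ) :
    x ⬝ᵥ y = ∑ j, (x ⬝ᵥ (WithLp.equiv 2 _) (b j)) * ((WithLp.equiv 2 _) (b j) ⬝ᵥ y) := by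
  have h := b.sum_inner_mul_inner ((WithLp.equiv 2 _).symm x) ((WithLp.equiv 2 _).symm y)
  simp only [inner_eq_dot, Equiv.apply_symm_apply] at h
  exact h.symm

private lemma bessel_dot {ι : Type*} [DecidableEq ι] (s : Finset ι) (x : ι → Fin k → ℝ)
    (h : ∀ i ∈ s, ∀ j ∈ s, x i ⬝ᵥ x j = if i = j then 1 else 0) (w : Fin k → ℝ) :
    ∑ i ∈ s, (x i ⬝ᵥ w)^2 ≤ w ⬝ᵥ w := by
  have h0 := dot_self_nonneg' (w - ∑ i ∈ s, (x i ⬝ᵥ w) • x i)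
  have e1 : ∀ z : Fin k → ℝ,
      z ⬝ᵥ (∑ i ∈ s, (x i ⬝ᵥ w) • x i) = ∑ i ∈ s, (x i ⬝ᵥ w) * (z ⬝ᵥ x i) := by
    intro z
    rw [dotProduct_comm, sum_dot]
    exact Finset.sum_congr rfl fun i _ => by
      rw [smul_dotProduct, smul_eq_mul, dotProduct_comm (x i) z]
  have expand : (w - ∑ i ∈ s, (x i ⬝ᵥ w) • x i) ⬝ᵥ (w - ∑ i ∈ s, (x i ⬝ᵥ w) • x i)
      = w ⬝ᵥ w - ∑ i ∈ s, (x i ⬝ᵥ w)^2 := by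
    rw [sub_dotProduct, dotProduct_sub, dotProduct_sub,
      sum_dot, sum_dot, e1 w]
    have e2 : ∑ i ∈ s, ((x i ⬝ᵥ w) • x i) ⬝ᵥ w = ∑ i ∈ s, (x i ⬝ᵥ w)^2 :=
      Finset.sum_congr rfl fun i _ => by
        rw [smul_dotProduct, smul_eq_mul, sq]
    have e3 : ∑ i ∈ s, ((x i ⬝ᵥ w) • x i) ⬝ᵥ (∑ j ∈ s, (x j ⬝ᵥ w) • x j)
        = ∑ i ∈ s, (x i ⬝ᵥ w)^2 := by
      refine Finset.sum_congr rfl fun i hi => ?_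
      rw [smul_dotProduct, e1, smul_eq_mul]
      have hsum : ∀ j ∈ s, (x j ⬝ᵥ w) * (x i ⬝ᵥ x j)
          = if j = i then (x i ⬝ᵥ w) * 1 else 0 := by
        intro j hj
        rw [h i hi j hj]
        by_cases hij : i = j <;> simp [hij, eq_comm]
      rw [Finset.sum_congr rfl hsum, Finset.sum_ite_eq' s i (fun _ => (x i ⬝ᵥ w) * 1)]
      simp [hi, sq]
    rw [e2, e3]
    have e4 : ∑ i ∈ s, (x i ⬝ᵥ w) * (w ⬝ᵥ x i) = ∑ i ∈ s, (x i ⬝ᵥ w)^2 :=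
      Finset.sum_congr rfl fun i _ => by rw [dotProduct_comm w (x i), sq]
    rw [e4]; ring
  rw [expand] at h0
  linarith

private lemma cs_dot (x w : Fin k → ℝ) : (x ⬝ᵥ w)^2 ≤ (x ⬝ᵥ x) * (w ⬝ᵥ w) := by
  have := Finset.sum_mul_sq_le_sq_mul_sq Finset.univ x w
  simpa [dotProduct, sq] using this

end aux

section spec
open Matrix Finset
variable {m n : ℕ} (M : Matrix (Fin m) (Fin n) ℝ)

noncomputable def evec (j : Fin n) : Fin n → ℝ :=
  (WithLp.equiv 2 _) ((Matrix.isHermitian_conjTranspose_mul_self M).eigenvectorBasis j)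

lemma eigen_mulVec (j : Fin n) :
    (Mᴴ * M) *ᵥ evec M j
      = (Matrix.isHermitian_conjTranspose_mul_self M).eigenvalues j • evec M j :=
  (Matrix.isHermitian_conjTranspose_mul_self M).mulVec_eigenvectorBasis j

lemma evec_ortho (i j : Fin n) : evec M i ⬝ᵥ evec M j = if i = j then 1 else 0 := by
  have h := orthonormal_iff_ite.mp
    (Matrix.isHermitian_conjTranspose_mul_self M).eigenvectorBasis.orthonormal i j
  rw [inner_eq_dot] at h
  exact h

lemma eigval_nonneg (j : Fin n) :
    0 ≤ (Matrix.isHermitian_conjTranspose_mul_self M).eigenvalues j :=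
  (Matrix.posSemidef_conjTranspose_mul_self M).eigenvalues_nonneg j

lemma sv_nonneg (j : Fin n) : 0 ≤ singularValues M j := Real.sqrt_nonneg _

lemma sv_sq (j : Fin n) :
    singularValues M j ^ 2 = (Matrix.isHermitian_conjTranspose_mul_self M).eigenvalues j :=
  Real.sq_sqrt (eigval_nonneg M j)

lemma sv_le_spec (j : Fin n) : singularValues M j ≤ spectralNorm' M :=
  le_ciSup (Set.Finite.bddAbove (Set.finite_range _)) j

lemma mulVec_dot (u y : Fin n → ℝ) :
    (M *ᵥ u) ⬝ᵥ (M *ᵥ y) = u ⬝ᵥ ((Mᴴ * M) *ᵥ y) := by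
  rw [Matrix.conjTranspose_eq_transpose_of_trivial, ← Matrix.mulVec_mulVec,
    Matrix.dotProduct_mulVec u, Matrix.vecMul_transpose]

lemma dot_eigvec_mulVec (y : Fin n → ℝ) (j : Fin n) :
    evec M j ⬝ᵥ ((Mᴴ * M) *ᵥ y)
      = (Matrix.isHermitian_conjTranspose_mul_self M).eigenvalues j * (evec M j ⬝ᵥ y) := by
  have hsymm : (Mᴴ * M)ᵀ = Mᴴ * M := by
    have h := (Matrix.isHermitian_conjTranspose_mul_self M)
    rw [Matrix.IsHermitian] at h
    rw [← Matrix.conjTranspose_eq_transpose_of_trivial, h]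
  rw [Matrix.dotProduct_mulVec]
  nth_rewrite 1 [← hsymm]
  rw [Matrix.vecMul_transpose, eigen_mulVec, smul_dotProduct, smul_eq_mul]

lemma dot_expand_evec (x y : Fin n → ℝ) :
    x ⬝ᵥ y = ∑ j, (x ⬝ᵥ evec M j) * (evec M j ⬝ᵥ y) :=
  dot_expand (Matrix.isHermitian_conjTranspose_mul_self M).eigenvectorBasis x y

lemma quad_bound (y : Fin n → ℝ) :
    (M *ᵥ y) ⬝ᵥ (M *ᵥ y) ≤ spectralNorm' M ^ 2 * (y ⬝ᵥ y) := by
  rw [mulVec_dot, dot_expand_evec M y ((Mᴴ * M) *ᵥ y)]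
  have step : ∀ j, (y ⬝ᵥ evec M j) * (evec M j ⬝ᵥ ((Mᴴ * M) *ᵥ y))
      ≤ spectralNorm' M ^ 2 * ((y ⬝ᵥ evec M j) * (evec M j ⬝ᵥ y)) := by
    intro j
    rw [dot_eigvec_mulVec]
    have hc : y ⬝ᵥ evec M j = evec M j ⬝ᵥ y := dotProduct_comm _ _
    rw [hc]
    have hev : (Matrix.isHermitian_conjTranspose_mul_self M).eigenvalues j
        ≤ spectralNorm' M ^ 2 := by
      rw [← sv_sq]
      have h1 := sv_le_spec M j
      have h2 := sv_nonneg M j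
      nlinarith
    nlinarith [sq_nonneg (evec M j ⬝ᵥ y), eigval_nonneg M j, sq_nonneg (spectralNorm' M)]
  calc ∑ j, (y ⬝ᵥ evec M j) * (evec M j ⬝ᵥ ((Mᴴ * M) *ᵥ y))
      ≤ ∑ j, spectralNorm' M ^ 2 * ((y ⬝ᵥ evec M j) * (evec M j ⬝ᵥ y)) :=
        Finset.sum_le_sum fun j _ => step j
    _ = spectralNorm' M ^ 2 * (y ⬝ᵥ y) := by
        rw [← Finset.mul_sum, ← dot_expand_evec M y y]

lemma dot_mulVec_le (x : Fin m → ℝ) (y : Fin n → ℝ) (hx : x ⬝ᵥ x ≤ 1) (hy : y ⬝ᵥ y ≤ 1)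
    (hspec : 0 ≤ spectralNorm' M) : |x ⬝ᵥ (M *ᵥ y)| ≤ spectralNorm' M := by
  have h2 : (x ⬝ᵥ (M *ᵥ y))^2 ≤ spectralNorm' M ^ 2 := by
    nlinarith [cs_dot x (M *ᵥ y), quad_bound M y, dot_self_nonneg' (M *ᵥ y),
      dot_self_nonneg' x, dot_self_nonneg' y, sq_nonneg (spectralNorm' M)]
  rw [← Real.sqrt_sq hspec, ← Real.sqrt_sq_eq_abs]
  exact Real.sqrt_le_sqrt h2

lemma sum_dot_B_le (B : Matrix (Fin m) (Fin n) ℝ) (S : Finset (Fin n))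
    (x : Fin n → Fin m → ℝ)
    (hx : ∀ i ∈ S, ∀ j ∈ S, x i ⬝ᵥ x j = if i = j then 1 else 0)
    (v : Fin n → Fin n → ℝ)
    (hv : ∀ i ∈ S, ∀ j ∈ S, v i ⬝ᵥ v j = if i = j then 1 else 0) :
    ∑ i ∈ S, x i ⬝ᵥ (B *ᵥ v i) ≤ nuclearNorm B := by
  have expand : ∀ i, x i ⬝ᵥ (B *ᵥ v i)
      = ∑ j, (x i ⬝ᵥ (B *ᵥ evec B j)) * (evec B j ⬝ᵥ v i) := by
    intro i
    rw [Matrix.dotProduct_mulVec, dot_expand_evec B (x i ᵥ* B) (v i)]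
    exact Finset.sum_congr rfl fun j _ => by rw [Matrix.dotProduct_mulVec]
  calc ∑ i ∈ S, x i ⬝ᵥ (B *ᵥ v i)
      = ∑ i ∈ S, ∑ j, (x i ⬝ᵥ (B *ᵥ evec B j)) * (evec B j ⬝ᵥ v i) :=
        Finset.sum_congr rfl fun i _ => expand i
    _ = ∑ j, ∑ i ∈ S, (x i ⬝ᵥ (B *ᵥ evec B j)) * (evec B j ⬝ᵥ v i) := Finset.sum_comm
    _ ≤ ∑ j, singularValues B j := by
        refine Finset.sum_le_sum fun j _ => ?_
        have hcs := Real.sum_mul_le_sqrt_mul_sqrt S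
          (fun i => x i ⬝ᵥ (B *ᵥ evec B j)) (fun i => evec B j ⬝ᵥ v i)
        refine hcs.trans ?_
        have ha : ∑ i ∈ S, (x i ⬝ᵥ (B *ᵥ evec B j))^2
            ≤ (Matrix.isHermitian_conjTranspose_mul_self B).eigenvalues j := by
          have hb := bessel_dot S x hx (B *ᵥ evec B j)
          have : (B *ᵥ evec B j) ⬝ᵥ (B *ᵥ evec B j)
              = (Matrix.isHermitian_conjTranspose_mul_self B).eigenvalues j := by
            rw [mulVec_dot, dot_eigvec_mulVec]
            have := evec_ortho B j j
            simp at this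
            rw [this, mul_one]
          linarith [hb, this.le, this.ge]
        have hbb : ∑ i ∈ S, (evec B j ⬝ᵥ v i)^2 ≤ 1 := by
          have hb := bessel_dot S v hv (evec B j)
          have h1 : evec B j ⬝ᵥ evec B j = 1 := by simpa using evec_ortho B j j
          calc ∑ i ∈ S, (evec B j ⬝ᵥ v i)^2
              = ∑ i ∈ S, (v i ⬝ᵥ evec B j)^2 :=
                Finset.sum_congr rfl fun i _ => by rw [dotProduct_comm]
            _ ≤ evec B j ⬝ᵥ evec B j := hb
            _ = 1 := h1
        calc Real.sqrt (∑ i ∈ S, (x i ⬝ᵥ (B *ᵥ evec B j))^2)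
              * Real.sqrt (∑ i ∈ S, (evec B j ⬝ᵥ v i)^2)
            ≤ Real.sqrt ((Matrix.isHermitian_conjTranspose_mul_self B).eigenvalues j)
              * Real.sqrt 1 :=
              mul_le_mul (Real.sqrt_le_sqrt ha) (Real.sqrt_le_sqrt hbb)
                (Real.sqrt_nonneg _) (Real.sqrt_nonneg _)
          _ = singularValues B j := by rw [Real.sqrt_one, mul_one]; rfl
    _ = nuclearNorm B := rfl

end spec

open Matrix Finset in
open scoped Classical in
theorem card_thresholded_singularValues_le {m n : ℕ} (A B : Matrix (Fin m) (Fin n) ℝ)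
    (δ : ℝ) (hδ : 0 < δ) (hAB : 0 < spectralNorm' (A - B)) :
    ((Finset.univ.filter fun i =>
        (1 + δ) * spectralNorm' (A - B) < singularValues A i).card : ℝ)
      ≤ nuclearNorm B / (δ * spectralNorm' (A - B)) := by
  set t := spectralNorm' (A - B) with ht
  set S := Finset.univ.filter fun i => (1 + δ) * t < singularValues A i with hS
  have hσpos : ∀ i ∈ S, 0 < singularValues A i := by
    intro i hi
    rw [hS, Finset.mem_filter] at hi
    nlinarith [hi.2]
  set x : Fin n → Fin m → ℝ :=
    fun i => (singularValues A i)⁻¹ • (A *ᵥ evec A i) with hxdef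
  have hdotAA : ∀ i j, (A *ᵥ evec A i) ⬝ᵥ (A *ᵥ evec A j)
      = (Matrix.isHermitian_conjTranspose_mul_self A).eigenvalues i
        * (evec A i ⬝ᵥ evec A j) := by
    intro i j
    rw [mulVec_dot, dot_eigvec_mulVec]
  have hx : ∀ i ∈ S, ∀ j ∈ S, x i ⬝ᵥ x j = if i = j then 1 else 0 := by
    intro i hi j hj
    rw [hxdef]
    simp only [smul_dotProduct, dotProduct_smul, smul_eq_mul]
    rw [hdotAA, evec_ortho]
    by_cases hij : i = j
    · subst hij
      simp only [if_pos rfl]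
      rw [← sv_sq]
      have hne := (hσpos i hi).ne'
      field_simp
    · simp [hij]
  have hxx : ∀ i ∈ S, x i ⬝ᵥ x i ≤ 1 := by
    intro i hi
    rw [hx i hi i hi]; simp
  have hvv : ∀ i, evec A i ⬝ᵥ evec A i ≤ 1 := by
    intro i
    have := evec_ortho A i i
    simp at this
    rw [this]
  have hdiag : ∀ i ∈ S, x i ⬝ᵥ (A *ᵥ evec A i) = singularValues A i := by
    intro i hi
    rw [hxdef]
    simp only [smul_dotProduct, smul_eq_mul]
    rw [hdotAA, ← sv_sq]
    have h1 : evec A i ⬝ᵥ evec A i = 1 := by simpa using evec_ortho A i i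
    rw [h1, mul_one]
    have := (hσpos i hi).ne'
    field_simp
  have hMb : ∀ i ∈ S, |x i ⬝ᵥ ((A - B) *ᵥ evec A i)| ≤ t := by
    intro i hi
    exact dot_mulVec_le (A - B) (x i) (evec A i) (hxx i hi) (hvv i) hAB.le
  have hBlow : ∀ i ∈ S, δ * t ≤ x i ⬝ᵥ (B *ᵥ evec A i) := by
    intro i hi
    have hsub : (A - B) *ᵥ evec A i = A *ᵥ evec A i - B *ᵥ evec A i :=
      Matrix.sub_mulVec A B (evec A i)
    have hsplit : x i ⬝ᵥ (B *ᵥ evec A i)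
        = x i ⬝ᵥ (A *ᵥ evec A i) - x i ⬝ᵥ ((A - B) *ᵥ evec A i) := by
      rw [hsub, dotProduct_sub]; ring
    have habs := abs_le.mp (hMb i hi)
    have hmem : (1 + δ) * t < singularValues A i := by
      rw [hS, Finset.mem_filter] at hi; exact hi.2
    rw [hsplit, hdiag i hi]
    nlinarith [habs.2]
  have hsum : (S.card : ℝ) * (δ * t) ≤ nuclearNorm B := by
    calc (S.card : ℝ) * (δ * t) = ∑ _i ∈ S, δ * t := by
          rw [Finset.sum_const, nsmul_eq_mul]
      _ ≤ ∑ i ∈ S, x i ⬝ᵥ (B *ᵥ evec A i) := Finset.sum_le_sum hBlow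
      _ ≤ nuclearNorm B := sum_dot_B_le B S x hx (fun i => evec A i)
          (fun i _ j _ => evec_ortho A i j)
  rw [le_div_iff₀ (by positivity)]
  exact hsum
end

section
/- In the non-parametric Bradley–Terry model, let p_{ij} ∈ [0,1] for i ≠ j with p_{ji} = 1 − p_{ij}, and suppose there is a total order on {1,…,n} such that if i is stronger than j then p_{ik} ≥ p_{jk} for all k ≠ i, j. Let M be the n×n matrix with entries p_{ij} for i ≠ j and 0 on the diagonal. Then for every integer 1 ≤ k < n, the nuclear norm satisfies ‖M‖_* ≤ sqrt(n)·sqrt(3n/k)·sqrt(n) + n·sqrt(k) = sqrt(3)·n^{3/2}/sqrt(k) + n·sqrt(k). In particular, choosing k = ⌊n^{1/2}⌋, ‖M‖_* ≤ C·n^{5/4} for a universal constant C. -/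
open Finset Matrix

namespace BT

variable {n : ℕ}

noncomputable def lam (A : Matrix (Fin n) (Fin n) ℝ) : Fin n → ℝ :=
  (Matrix.isHermitian_conjTranspose_mul_self A).eigenvalues

noncomputable def V (A : Matrix (Fin n) (Fin n) ℝ) (j : Fin n) : Fin n → ℝ :=
  ⇑((Matrix.isHermitian_conjTranspose_mul_self A).eigenvectorBasis j)

lemma lam_nonneg (A : Matrix (Fin n) (Fin n) ℝ) (j : Fin n) : 0 ≤ lam A j :=
  Matrix.eigenvalues_conjTranspose_mul_self_nonneg A j

lemma dot_V (A : Matrix (Fin n) (Fin n) ℝ) (i j : Fin n) :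
    V A i ⬝ᵥ V A j = if i = j then 1 else 0 := by
  have h := orthonormal_iff_ite.mp
    ((Matrix.isHermitian_conjTranspose_mul_self A).eigenvectorBasis).orthonormal i j
  simpa [PiLp.inner_apply, RCLike.inner_apply, dotProduct, V, mul_comm] using h

lemma euc_sum_apply {m : ℕ} (s : Finset (Fin m)) (f : Fin m → EuclideanSpace ℝ (Fin n)) (i : Fin n) :
    (∑ j ∈ s, f j) i = ∑ j ∈ s, f j i := by
  classical
  induction s using Finset.induction with
  | empty => rfl
  | insert _ _ h ih => rw [Finset.sum_insert h, Finset.sum_insert h, ← ih]; rfl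

lemma expand_V (A : Matrix (Fin n) (Fin n) ℝ) (x : Fin n → ℝ) :
    ∑ j, (V A j ⬝ᵥ x) • V A j = x := by
  have h := ((Matrix.isHermitian_conjTranspose_mul_self A).eigenvectorBasis).sum_repr'
    (WithLp.toLp 2 x : EuclideanSpace ℝ (Fin n))
  funext i
  have h2 := congrArg (· i) h
  beta_reduce at h2
  rw [euc_sum_apply] at h2
  simp only [PiLp.inner_apply, RCLike.inner_apply, starRingEnd_apply, star_trivial, PiLp.toLp_apply] at h2
  rw [← h2]
  simp [dotProduct, V, Finset.sum_apply, mul_comm]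

lemma mulVec_V (A : Matrix (Fin n) (Fin n) ℝ) (j : Fin n) :
    (Aᴴ * A) *ᵥ V A j = lam A j • V A j :=
  (Matrix.isHermitian_conjTranspose_mul_self A).mulVec_eigenvectorBasis j

lemma dot_mulVec_mulVec (A : Matrix (Fin n) (Fin n) ℝ) (x y : Fin n → ℝ) :
    (A *ᵥ x) ⬝ᵥ (A *ᵥ y) = x ⬝ᵥ ((Aᴴ * A) *ᵥ y) := by
  rw [← Matrix.mulVec_mulVec, Matrix.dotProduct_mulVec x, Matrix.vecMul_conjTranspose]
  simp [Matrix.dotProduct_mulVec]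

lemma dot_AV (A : Matrix (Fin n) (Fin n) ℝ) (i j : Fin n) :
    (A *ᵥ V A i) ⬝ᵥ (A *ᵥ V A j) = if i = j then lam A j else 0 := by
  rw [dot_mulVec_mulVec, mulVec_V, dotProduct_smul, smul_eq_mul, dot_V]
  by_cases h : i = j <;> simp [h]


noncomputable def sig (A : Matrix (Fin n) (Fin n) ℝ) (j : Fin n) : ℝ := Real.sqrt (lam A j)

lemma sig_nonneg (A : Matrix (Fin n) (Fin n) ℝ) (j : Fin n) : 0 ≤ sig A j := Real.sqrt_nonneg _

lemma sig_sq (A : Matrix (Fin n) (Fin n) ℝ) (j : Fin n) : sig A j ^ 2 = lam A j := by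
  rw [sig, Real.sq_sqrt (lam_nonneg A j)]

noncomputable def U (A : Matrix (Fin n) (Fin n) ℝ) (j : Fin n) : Fin n → ℝ :=
  (sig A j)⁻¹ • (A *ᵥ V A j)

lemma dot_self_eq_zero' {x : Fin n → ℝ} (h : x ⬝ᵥ x = 0) : x = 0 := by
  funext i
  have hs : ∀ j ∈ Finset.univ, (0:ℝ) ≤ x j * x j := fun j _ => mul_self_nonneg _
  have := (Finset.sum_eq_zero_iff_of_nonneg hs).mp h i (Finset.mem_univ i)
  have := mul_self_eq_zero.mp this
  simpa using this

lemma AV_eq_sig_smul_U (A : Matrix (Fin n) (Fin n) ℝ) (j : Fin n) :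
    A *ᵥ V A j = sig A j • U A j := by
  by_cases h : sig A j = 0
  · have hl : lam A j = 0 := by
      have := sig_sq A j; rw [h] at this; simpa using this.symm
    have h0 : (A *ᵥ V A j) ⬝ᵥ (A *ᵥ V A j) = 0 := by
      rw [dot_AV]; simp [hl]
    rw [dot_self_eq_zero' h0, h]; simp
  · rw [U, smul_smul, mul_inv_cancel₀ h, one_smul]

lemma dotProduct_sum' {m : ℕ} (x : Fin n → ℝ) (f : Fin m → Fin n → ℝ) :
    x ⬝ᵥ (∑ j, f j) = ∑ j, x ⬝ᵥ f j := by
  simp only [dotProduct, Finset.sum_apply, Finset.mul_sum]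
  rw [Finset.sum_comm]

lemma sum_dotProduct' {m : ℕ} (x : Fin n → ℝ) (f : Fin m → Fin n → ℝ) :
    (∑ j, f j) ⬝ᵥ x = ∑ j, f j ⬝ᵥ x := by
  simp only [dotProduct, Finset.sum_apply, Finset.sum_mul]
  rw [Finset.sum_comm]

lemma dot_U (A : Matrix (Fin n) (Fin n) ℝ) (i j : Fin n) :
    U A i ⬝ᵥ U A j = if i = j ∧ sig A j ≠ 0 then 1 else 0 := by
  rw [U, U, smul_dotProduct, dotProduct_smul, dot_AV]
  by_cases h : i = j
  · subst h
    by_cases hs : sig A i = 0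
    · have hl : lam A i = 0 := by
        have := sig_sq A i; rw [hs] at this; simpa using this.symm
      simp [hs, hl]
    · have hl : lam A i = sig A i * sig A i := by
        rw [← pow_two, sig_sq]
      simp [hs, hl]
  · simp [h]

/-- Bessel-type inequality for a family that is orthogonal with norms ≤ 1. -/
lemma bessel {w : Fin n → Fin n → ℝ}
    (horth : ∀ i j, i ≠ j → w i ⬝ᵥ w j = 0) (hnorm : ∀ i, w i ⬝ᵥ w i ≤ 1)
    (z : Fin n → ℝ) : ∑ i, (z ⬝ᵥ w i) ^ 2 ≤ z ⬝ᵥ z := by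
  set c : Fin n → ℝ := fun i => z ⬝ᵥ w i with hc
  set r : Fin n → ℝ := fun i => (z - ∑ j, c j • w j) i with hr
  have hnn : (0:ℝ) ≤ r ⬝ᵥ r := by
    rw [dotProduct]
    exact Finset.sum_nonneg fun i _ => mul_self_nonneg _
  have hexp : r ⬝ᵥ r = z ⬝ᵥ z - 2 * ∑ i, c i ^ 2 + ∑ i, c i ^ 2 * (w i ⬝ᵥ w i) := by
    have hrdef : r = z - ∑ j, c j • w j := rfl
    rw [hrdef]
    rw [sub_dotProduct, dotProduct_sub, dotProduct_sub]
    rw [dotProduct_sum', sum_dotProduct']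
    have h4 : (∑ j, c j • w j) ⬝ᵥ (∑ j, c j • w j) = ∑ i, ∑ j, (c i • w i) ⬝ᵥ (c j • w j) := by
      rw [sum_dotProduct']
      exact Finset.sum_congr rfl fun i _ => dotProduct_sum' _ _
    rw [h4]
    simp only [dotProduct_smul, smul_dotProduct, smul_eq_mul]
    have h1 : ∀ j, c j * (z ⬝ᵥ w j) = c j ^ 2 := by
      intro j; rw [hc]; ring
    have h2 : ∀ j, c j * (w j ⬝ᵥ z) = c j ^ 2 := by
      intro j; rw [dotProduct_comm, hc]; ring
    have h3 : ∀ j, (∑ i, c i * (c j * (w i ⬝ᵥ w j))) = c j ^ 2 * (w j ⬝ᵥ w j) := by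
      intro j
      rw [Finset.sum_eq_single j]
      · ring
      · intro i _ hij; rw [horth i j hij]; ring
      · intro h; exact absurd (Finset.mem_univ j) h
    simp only [dotProduct_smul, smul_dotProduct, smul_eq_mul, h1, h2]
    have h3' : ∀ j, (∑ i, c j * (c i * (w i ⬝ᵥ w j))) = c j ^ 2 * (w j ⬝ᵥ w j) := by
      intro j
      rw [Finset.sum_eq_single j]
      · ring
      · intro i _ hij; rw [horth i j hij]; ring
      · intro h; exact absurd (Finset.mem_univ j) h
    rw [Finset.sum_comm, Finset.sum_congr rfl fun y (_ : y ∈ Finset.univ) => h3' y]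
    ring
  have hbound : ∑ i, c i ^ 2 * (w i ⬝ᵥ w i) ≤ ∑ i, c i ^ 2 := by
    apply Finset.sum_le_sum
    intro i _
    calc c i ^ 2 * (w i ⬝ᵥ w i) ≤ c i ^ 2 * 1 := by
          apply mul_le_mul_of_nonneg_left (hnorm i) (sq_nonneg _)
      _ = c i ^ 2 := mul_one _
  have : 0 ≤ z ⬝ᵥ z - ∑ i, c i ^ 2 := by
    have := hexp ▸ hnn
    linarith
  have hfin : ∑ i, c i ^ 2 ≤ z ⬝ᵥ z := by linarith
  simpa [hc] using hfin


lemma mulVec_sum' {m : ℕ} (A : Matrix (Fin n) (Fin n) ℝ) (f : Fin m → Fin n → ℝ) :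
    A *ᵥ (∑ j, f j) = ∑ j, A *ᵥ f j := by
  funext r
  rw [Finset.sum_apply]
  exact dotProduct_sum' (fun l => A r l) f

lemma key (A : Matrix (Fin n) (Fin n) ℝ) {x y : Fin n → Fin n → ℝ}
    (hxo : ∀ i j, i ≠ j → x i ⬝ᵥ x j = 0) (hxn : ∀ i, x i ⬝ᵥ x i ≤ 1)
    (hyo : ∀ i j, i ≠ j → y i ⬝ᵥ y j = 0) (hyn : ∀ i, y i ⬝ᵥ y i ≤ 1) :
    ∑ i, (A *ᵥ x i) ⬝ᵥ y i ≤ ∑ j, sig A j := by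
  have hAx : ∀ z : Fin n → ℝ, A *ᵥ z = ∑ j, ((V A j ⬝ᵥ z) * sig A j) • U A j := by
    intro z
    conv_lhs => rw [← expand_V A z]
    rw [mulVec_sum']
    refine Finset.sum_congr rfl fun j _ => ?_
    rw [Matrix.mulVec_smul, AV_eq_sig_smul_U, smul_smul]
  have hstep : ∀ i, (A *ᵥ x i) ⬝ᵥ y i = ∑ j, sig A j * ((V A j ⬝ᵥ x i) * (U A j ⬝ᵥ y i)) := by
    intro i
    rw [hAx (x i), sum_dotProduct']
    refine Finset.sum_congr rfl fun j _ => ?_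
    rw [smul_dotProduct, smul_eq_mul]
    ring
  calc ∑ i, (A *ᵥ x i) ⬝ᵥ y i
      = ∑ j, sig A j * ∑ i, (V A j ⬝ᵥ x i) * (U A j ⬝ᵥ y i) := by
        rw [Finset.sum_congr rfl fun i (_ : i ∈ Finset.univ) => hstep i, Finset.sum_comm]
        exact Finset.sum_congr rfl fun j _ => by rw [Finset.mul_sum]
    _ ≤ ∑ j, sig A j * 1 := by
        refine Finset.sum_le_sum fun j _ => ?_
        refine mul_le_mul_of_nonneg_left ?_ (sig_nonneg A j)
        calc ∑ i, (V A j ⬝ᵥ x i) * (U A j ⬝ᵥ y i)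
            ≤ Real.sqrt (∑ i, (V A j ⬝ᵥ x i) ^ 2) * Real.sqrt (∑ i, (U A j ⬝ᵥ y i) ^ 2) :=
              Real.sum_mul_le_sqrt_mul_sqrt _ _ _
          _ ≤ Real.sqrt 1 * Real.sqrt 1 := by
              have b1 : ∑ i, (V A j ⬝ᵥ x i) ^ 2 ≤ 1 := by
                have := bessel hxo hxn (V A j)
                rwa [dot_V, if_pos rfl] at this
              have b2 : ∑ i, (U A j ⬝ᵥ y i) ^ 2 ≤ 1 := by
                have := bessel hyo hyn (U A j)
                calc ∑ i, (U A j ⬝ᵥ y i) ^ 2 ≤ U A j ⬝ᵥ U A j := this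
                  _ ≤ 1 := by rw [dot_U]; split <;> norm_num
              exact mul_le_mul (Real.sqrt_le_sqrt b1) (Real.sqrt_le_sqrt b2)
                (Real.sqrt_nonneg _) (Real.sqrt_nonneg _)
          _ = 1 := by rw [Real.sqrt_one, mul_one]
    _ = ∑ j, sig A j := by simp

lemma sig_sum_eq (A : Matrix (Fin n) (Fin n) ℝ) :
    ∑ j, sig A j = ∑ j, (A *ᵥ V A j) ⬝ᵥ U A j := by
  refine Finset.sum_congr rfl fun j _ => ?_
  rw [AV_eq_sig_smul_U, smul_dotProduct, smul_eq_mul, dot_U]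
  by_cases h : sig A j = 0
  · simp [h]
  · simp [h]

lemma sig_sum_triangle (A B : Matrix (Fin n) (Fin n) ℝ) :
    ∑ j, sig (A + B) j ≤ ∑ j, sig A j + ∑ j, sig B j := by
  rw [sig_sum_eq (A + B)]
  have hsplit : ∀ j, ((A + B) *ᵥ V (A + B) j) ⬝ᵥ U (A + B) j
      = (A *ᵥ V (A + B) j) ⬝ᵥ U (A + B) j + (B *ᵥ V (A + B) j) ⬝ᵥ U (A + B) j := by
    intro j
    rw [Matrix.add_mulVec, add_dotProduct]
  rw [Finset.sum_congr rfl fun j (_ : j ∈ Finset.univ) => hsplit j, Finset.sum_add_distrib]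
  have hVo : ∀ i j, i ≠ j → V (A + B) i ⬝ᵥ V (A + B) j = 0 := by
    intro i j h; rw [dot_V, if_neg h]
  have hVn : ∀ i, V (A + B) i ⬝ᵥ V (A + B) i ≤ 1 := by
    intro i; rw [dot_V, if_pos rfl]
  have hUo : ∀ i j, i ≠ j → U (A + B) i ⬝ᵥ U (A + B) j = 0 := by
    intro i j h; rw [dot_U]; simp [h]
  have hUn : ∀ i, U (A + B) i ⬝ᵥ U (A + B) i ≤ 1 := by
    intro i; rw [dot_U]; split <;> norm_num
  exact add_le_add (key A hVo hVn hUo hUn) (key B hVo hVn hUo hUn)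


lemma parseval (A : Matrix (Fin n) (Fin n) ℝ) (z : Fin n → ℝ) :
    ∑ j, (V A j ⬝ᵥ z) ^ 2 = z ⬝ᵥ z := by
  calc ∑ j, (V A j ⬝ᵥ z) ^ 2
      = ∑ j, ((V A j ⬝ᵥ z) • V A j) ⬝ᵥ z := by
        refine Finset.sum_congr rfl fun j _ => ?_
        rw [smul_dotProduct, smul_eq_mul, sq]
    _ = (∑ j, (V A j ⬝ᵥ z) • V A j) ⬝ᵥ z := (sum_dotProduct' z _).symm
    _ = z ⬝ᵥ z := by rw [expand_V]

lemma sum_lam (A : Matrix (Fin n) (Fin n) ℝ) :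
    ∑ j, lam A j = ∑ i, ∑ l, (A i l) ^ 2 := by
  have h1 : ∀ j, lam A j = ∑ i, (V A j ⬝ᵥ (fun l => A i l)) ^ 2 := by
    intro j
    have := dot_AV A j j
    rw [if_pos rfl] at this
    rw [← this, dotProduct]
    refine Finset.sum_congr rfl fun i _ => ?_
    have : (A *ᵥ V A j) i = (fun l => A i l) ⬝ᵥ V A j := rfl
    rw [this, dotProduct_comm, sq]
  rw [Finset.sum_congr rfl fun j (_ : j ∈ Finset.univ) => h1 j, Finset.sum_comm]
  refine Finset.sum_congr rfl fun i _ => ?_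
  rw [parseval]
  simp [dotProduct, sq]

lemma sig_sum_le_sqrt_rank (A : Matrix (Fin n) (Fin n) ℝ) (r : ℕ) (h : A.rank ≤ r) :
    ∑ j, sig A j ≤ Real.sqrt r * Real.sqrt (∑ j, lam A j) := by
  classical
  set S : Finset (Fin n) := Finset.univ.filter (fun j => lam A j ≠ 0) with hS
  have hcard : S.card ≤ r := by
    have e1 := (Matrix.isHermitian_conjTranspose_mul_self A).rank_eq_card_non_zero_eigs
    have e2 := Matrix.rank_conjTranspose_mul_self A
    have e4 : A.rank = S.card := by
      rw [← e2, e1, hS]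
      exact Fintype.card_subtype _
    rw [← e4]; exact h
  have hzero : ∀ j ∈ Finset.univ, j ∉ S → sig A j = 0 := by
    intro j _ hj
    rw [hS, Finset.mem_filter] at hj
    push_neg at hj
    have hlam : lam A j = 0 := hj (Finset.mem_univ j)
    rw [sig, hlam, Real.sqrt_zero]
  rw [← Finset.sum_subset (Finset.subset_univ S) hzero]
  calc ∑ j ∈ S, sig A j
      = ∑ j ∈ S, (1 : ℝ) * sig A j := by simp
    _ ≤ Real.sqrt (∑ j ∈ S, (1:ℝ) ^ 2) * Real.sqrt (∑ j ∈ S, sig A j ^ 2) :=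
        Real.sum_mul_le_sqrt_mul_sqrt _ _ _
    _ ≤ Real.sqrt r * Real.sqrt (∑ j, lam A j) := by
        refine mul_le_mul (Real.sqrt_le_sqrt ?_) (Real.sqrt_le_sqrt ?_)
          (Real.sqrt_nonneg _) (Real.sqrt_nonneg _)
        · simp only [one_pow, Finset.sum_const, nsmul_eq_mul, mul_one]
          exact_mod_cast hcard
        · calc ∑ j ∈ S, sig A j ^ 2 = ∑ j ∈ S, lam A j :=
                Finset.sum_congr rfl fun j _ => sig_sq A j
            _ ≤ ∑ j, lam A j :=
                Finset.sum_le_sum_of_subset_of_nonneg (Finset.subset_univ S)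
                  fun j _ _ => lam_nonneg A j


lemma nuclearNorm_le_sqrt_mul_frobenius {r : ℕ} (A : Matrix (Fin n) (Fin n) ℝ)
    (h : A.rank ≤ r) : nuclearNorm A ≤ Real.sqrt r * frobeniusNorm A := by
  have h1 : nuclearNorm A = ∑ j, sig A j := rfl
  rw [h1, frobeniusNorm, ← sum_lam]
  exact sig_sum_le_sqrt_rank A r h

lemma nuclearNorm_triangle (A B : Matrix (Fin n) (Fin n) ℝ) :
    nuclearNorm (A + B) ≤ nuclearNorm A + nuclearNorm B :=
  sig_sum_triangle A B

lemma nuclearNorm_nonneg (A : Matrix (Fin n) (Fin n) ℝ) : 0 ≤ nuclearNorm A :=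
  Finset.sum_nonneg fun j _ => Real.sqrt_nonneg _


lemma main_bound {n : ℕ} (p : Matrix (Fin n) (Fin n) ℝ)
    (hp : ∀ i j, p i j ∈ Set.Icc (0:ℝ) 1)
    (rk : Fin n → Fin n) (hrk : Function.Bijective rk)
    (hmono : ∀ i j l : Fin n, rk j < rk i → l ≠ i → l ≠ j → p j l ≤ p i l)
    (M : Matrix (Fin n) (Fin n) ℝ) (hM : ∀ i j, M i j = if i = j then 0 else p i j)
    (k : ℕ) (hk1 : 1 ≤ k) (hkn : k < n) :
    nuclearNorm M ≤ Real.sqrt 3 * (n:ℝ) ^ ((3:ℝ)/2) / Real.sqrt k + n * Real.sqrt k := by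
  classical
  have hn : 0 < n := lt_of_le_of_lt (Nat.zero_le k) hkn
  have hnR : (0:ℝ) < n := by exact_mod_cast hn
  have hkR : (0:ℝ) < k := by exact_mod_cast hk1
  have hknR : (k:ℝ) ≤ n := by exact_mod_cast le_of_lt hkn
  have hM0 : ∀ i j, 0 ≤ M i j := by
    intro i j; rw [hM]; split
    · exact le_refl 0
    · exact (hp i j).1
  have hM1 : ∀ i j, M i j ≤ 1 := by
    intro i j; rw [hM]; split
    · norm_num
    · exact (hp i j).2
  have hMdiag : ∀ i, M i i = 0 := by intro i; rw [hM, if_pos rfl]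
  set t : Fin n → ℝ := fun i => ∑ l, M i l with ht
  have ht0 : ∀ i, 0 ≤ t i := fun i => Finset.sum_nonneg fun l _ => hM0 i l
  have htn : ∀ i, t i ≤ n := by
    intro i
    calc t i ≤ ∑ _l : Fin n, (1:ℝ) := Finset.sum_le_sum fun l _ => hM1 i l
      _ = n := by simp
  set g : Fin n → ℕ := fun i => min (k-1) ⌊t i * k / n⌋₊ with hg
  have hg_lt : ∀ i, g i < k := fun i =>
    lt_of_le_of_lt (min_le_left _ _) (Nat.sub_lt hk1 one_pos)
  have hlow : ∀ i, (g i : ℝ) * n / k ≤ t i := by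
    intro i
    have h1 : (g i : ℕ) ≤ ⌊t i * k / n⌋₊ := min_le_right _ _
    have h2 : (g i : ℝ) ≤ t i * k / n := by
      calc (g i : ℝ) ≤ (⌊t i * k / n⌋₊ : ℝ) := by exact_mod_cast h1
        _ ≤ t i * k / n := Nat.floor_le (div_nonneg (mul_nonneg (ht0 i) hkR.le) hnR.le)
    rw [div_le_iff₀ hkR]
    calc (g i : ℝ) * n ≤ (t i * k / n) * n := by
          apply mul_le_mul_of_nonneg_right h2 (le_of_lt hnR)
      _ = t i * k := by field_simp
  have hup : ∀ i, t i ≤ ((g i : ℝ) + 1) * n / k := by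
    intro i
    by_cases hc : ⌊t i * k / n⌋₊ ≤ k - 1
    · have hgi : g i = ⌊t i * k / n⌋₊ := min_eq_right hc
      have h2 : t i * k / n < (⌊t i * k / n⌋₊ : ℝ) + 1 := Nat.lt_floor_add_one _
      have h3 : t i * k / n ≤ (g i : ℝ) + 1 := by rw [hgi]; exact le_of_lt h2
      rw [le_div_iff₀ hkR]
      calc t i * k = (t i * k / n) * n := by field_simp
        _ ≤ ((g i : ℝ) + 1) * n := mul_le_mul_of_nonneg_right h3 (le_of_lt hnR)
    · have hgi : g i = k - 1 := min_eq_left (le_of_not_ge hc)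
      have : ((g i : ℝ) + 1) = k := by
        rw [hgi]
        have : (k - 1 : ℕ) + 1 = k := Nat.succ_pred_eq_of_pos hk1
        exact_mod_cast congrArg (Nat.cast : ℕ → ℝ) this
      rw [this]
      calc t i ≤ n := htn i
        _ = (k:ℝ) * n / k := by field_simp
  have hdiff : ∀ i j, g i = g j → t i - t j ≤ (n:ℝ)/k := by
    intro i j h
    have h1 := hup i
    have h2 := hlow j
    rw [h] at h1
    have h3 : ((g j : ℝ) + 1) * n / k - (g j : ℝ) * n / k = (n:ℝ)/k := by ring
    linarith
  set F : ℕ → Fin n := fun m => if h : ∃ j : Fin n, g j = m then h.choose else ⟨0, hn⟩ with hF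
  have hFg : ∀ i, g (F (g i)) = g i := by
    intro i
    have hex : ∃ j : Fin n, g j = g i := ⟨i, rfl⟩
    simp only [hF, dif_pos hex]
    exact hex.choose_spec
  set N : Matrix (Fin n) (Fin n) ℝ := Matrix.of (fun i l => M (F (g i)) l) with hN
  have hNapp : ∀ i l, N i l = M (F (g i)) l := fun i l => rfl
  -- rank bound
  have hrank : N.rank ≤ k := by
    set Q : Matrix (Fin n) (Fin k) ℝ :=
      Matrix.of (fun i (b : Fin k) => if (b:ℕ) = g i then (1:ℝ) else 0) with hQ
    set S : Matrix (Fin k) (Fin n) ℝ := Matrix.of (fun (b : Fin k) l => M (F (b:ℕ)) l) with hS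
    have hfact : N = Q * S := by
      ext i l
      rw [Matrix.mul_apply]
      rw [Finset.sum_eq_single (⟨g i, hg_lt i⟩ : Fin k)]
      · simp [hQ, hS, hN]
      · intro b _ hb
        have : (b:ℕ) ≠ g i := by
          intro hcon
          apply hb
          apply Fin.ext
          exact hcon
        simp [hQ, this]
      · intro h; exact absurd (Finset.mem_univ _) h
    rw [hfact]
    calc (Q * S).rank ≤ S.rank := Matrix.rank_mul_le_right Q S
      _ ≤ Fintype.card (Fin k) := Matrix.rank_le_card_height S
      _ = k := Fintype.card_fin k
  -- row bound
  have hrow : ∀ a b : Fin n, rk b < rk a → ∑ l, (M a l - M b l)^2 ≤ (t a - t b) + 2 := by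
    intro a b hab
    have hpt : ∀ l, (M a l - M b l)^2 ≤ (M a l - M b l) + (if l = a then 2 * M b a else 0) := by
      intro l
      by_cases hla : l = a
      · subst hla
        rw [if_pos rfl, hMdiag l]
        have h1 := hM0 b l
        have h2 := hM1 b l
        nlinarith
      · rw [if_neg hla]
        by_cases hlb : l = b
        · subst hlb
          rw [hMdiag l]
          have h1 := hM0 a l
          have h2 := hM1 a l
          nlinarith
        · have hmono' : M b l ≤ M a l := by
            rw [hM, hM, if_neg (Ne.symm hlb), if_neg (Ne.symm hla)]
            exact hmono a b l hab hla hlb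
          have h1 := hM0 b l
          have h2 := hM1 a l
          nlinarith
    calc ∑ l, (M a l - M b l)^2
        ≤ ∑ l, ((M a l - M b l) + (if l = a then 2 * M b a else 0)) :=
          Finset.sum_le_sum fun l _ => hpt l
      _ = (t a - t b) + 2 * M b a := by
          rw [Finset.sum_add_distrib, Finset.sum_sub_distrib, Finset.sum_ite_eq' Finset.univ a]
          simp [ht]
      _ ≤ (t a - t b) + 2 := by
          have := hM1 b a
          linarith
  have hrowN : ∀ i, ∑ l, (M i l - N i l)^2 ≤ (n:ℝ)/k + 2 := by
    intro i
    have hgb : g (F (g i)) = g i := hFg i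
    have hd1 : t i - t (F (g i)) ≤ (n:ℝ)/k := hdiff i (F (g i)) hgb.symm
    have hd2 : t (F (g i)) - t i ≤ (n:ℝ)/k := hdiff (F (g i)) i hgb
    rcases lt_trichotomy (rk (F (g i))) (rk i) with h|h|h
    · calc ∑ l, (M i l - N i l)^2 = ∑ l, (M i l - M (F (g i)) l)^2 := rfl
        _ ≤ (t i - t (F (g i))) + 2 := hrow i (F (g i)) h
        _ ≤ (n:ℝ)/k + 2 := by linarith
    · have heq : F (g i) = i := hrk.injective h
      calc ∑ l, (M i l - N i l)^2 = ∑ l, (M i l - M (F (g i)) l)^2 := rfl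
        _ = 0 := by rw [heq]; simp
        _ ≤ (n:ℝ)/k + 2 := by positivity
    · calc ∑ l, (M i l - N i l)^2 = ∑ l, (M (F (g i)) l - M i l)^2 := by
            refine Finset.sum_congr rfl fun l _ => ?_
            have : ∀ x y : ℝ, (x - y)^2 = (y - x)^2 := fun x y => by ring
            rw [hNapp]
            exact this _ _
        _ ≤ (t (F (g i)) - t i) + 2 := hrow (F (g i)) i h
        _ ≤ (n:ℝ)/k + 2 := by linarith
  -- frobenius bounds
  have hfrob1 : frobeniusNorm (M - N) ≤ Real.sqrt (3 * (n:ℝ)^2 / k) := by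
    rw [frobeniusNorm]
    apply Real.sqrt_le_sqrt
    calc ∑ i, ∑ l, ((M - N) i l)^2 = ∑ i, ∑ l, (M i l - N i l)^2 := by
          refine Finset.sum_congr rfl fun i _ => Finset.sum_congr rfl fun l _ => ?_
          rw [Matrix.sub_apply]
      _ ≤ ∑ _i : Fin n, ((n:ℝ)/k + 2) := Finset.sum_le_sum fun i _ => hrowN i
      _ = n * ((n:ℝ)/k + 2) := by rw [Finset.sum_const, Finset.card_univ, Fintype.card_fin, nsmul_eq_mul]
      _ ≤ 3 * (n:ℝ)^2 / k := by
          have h2 : 2*(n:ℝ) ≤ 2*(n:ℝ)^2/k := by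
            rw [le_div_iff₀ hkR]; nlinarith
          have e1 : (n:ℝ) * ((n:ℝ)/k + 2) = (n:ℝ)^2/k + 2*n := by ring
          have e2 : 3 * (n:ℝ)^2 / k = (n:ℝ)^2/k + 2*(n:ℝ)^2/k := by ring
          linarith
  have hfrob2 : frobeniusNorm N ≤ n := by
    rw [frobeniusNorm]
    have hsum : ∑ i, ∑ l, (N i l)^2 ≤ (n:ℝ)^2 := by
      calc ∑ i, ∑ l, (N i l)^2 ≤ ∑ _i : Fin n, ∑ _l : Fin n, (1:ℝ) := by
            refine Finset.sum_le_sum fun i _ => Finset.sum_le_sum fun l _ => ?_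
            rw [hNapp]
            have h1 := hM0 (F (g i)) l
            have h2 := hM1 (F (g i)) l
            nlinarith
        _ = (n:ℝ)^2 := by simp [sq]
    calc Real.sqrt (∑ i, ∑ l, (N i l)^2) ≤ Real.sqrt ((n:ℝ)^2) := Real.sqrt_le_sqrt hsum
      _ = n := Real.sqrt_sq (le_of_lt hnR)
  -- assemble
  have hrankMN : (M - N).rank ≤ n := by
    calc (M - N).rank ≤ Fintype.card (Fin n) := Matrix.rank_le_card_height (M - N)
      _ = n := Fintype.card_fin n
  have hmain : nuclearNorm M ≤ Real.sqrt n * Real.sqrt (3 * (n:ℝ)^2 / k) + Real.sqrt k * n := by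
    calc nuclearNorm M = nuclearNorm ((M - N) + N) := by rw [sub_add_cancel]
      _ ≤ nuclearNorm (M - N) + nuclearNorm N := nuclearNorm_triangle _ _
      _ ≤ Real.sqrt n * frobeniusNorm (M - N) + Real.sqrt k * frobeniusNorm N :=
          add_le_add (nuclearNorm_le_sqrt_mul_frobenius _ hrankMN)
            (nuclearNorm_le_sqrt_mul_frobenius _ hrank)
      _ ≤ Real.sqrt n * Real.sqrt (3 * (n:ℝ)^2 / k) + Real.sqrt k * n :=
          add_le_add (mul_le_mul_of_nonneg_left hfrob1 (Real.sqrt_nonneg _))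
            (mul_le_mul_of_nonneg_left hfrob2 (Real.sqrt_nonneg _))
  have harith : Real.sqrt (n:ℝ) * Real.sqrt (3 * (n:ℝ)^2 / k)
      = Real.sqrt 3 * (n:ℝ) ^ ((3:ℝ)/2) / Real.sqrt k := by
    have hpow : (n:ℝ) ^ ((3:ℝ)/2) = Real.sqrt ((n:ℝ)^3) := by
      rw [show (3:ℝ)/2 = ((3:ℕ):ℝ) * (1/2) by norm_num, Real.rpow_mul hnR.le,
        Real.rpow_natCast, ← Real.sqrt_eq_rpow]
    rw [hpow]
    calc Real.sqrt (n:ℝ) * Real.sqrt (3 * (n:ℝ)^2 / k)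
        = Real.sqrt ((n:ℝ) * (3 * (n:ℝ)^2 / k)) := (Real.sqrt_mul hnR.le _).symm
      _ = Real.sqrt (3 * (n:ℝ)^3 / k) := by
          rw [show (n:ℝ) * (3 * (n:ℝ)^2 / k) = 3 * (n:ℝ)^3 / k by ring]
      _ = Real.sqrt (3 * (n:ℝ)^3) / Real.sqrt k := Real.sqrt_div (by positivity) _
      _ = Real.sqrt 3 * Real.sqrt ((n:ℝ)^3) / Real.sqrt k := by
          rw [Real.sqrt_mul (by norm_num : (0:ℝ) ≤ 3)]
  calc nuclearNorm M ≤ Real.sqrt n * Real.sqrt (3 * (n:ℝ)^2 / k) + Real.sqrt k * n := hmain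
    _ = Real.sqrt 3 * (n:ℝ) ^ ((3:ℝ)/2) / Real.sqrt k + n * Real.sqrt k := by
        rw [harith]; ring


lemma arith {n k : ℕ} (hn : 2 ≤ n) (hk1 : 1 ≤ k) (h1 : k * k ≤ n) (h2 : n < (k+1) * (k+1)) :
    Real.sqrt 3 * (n:ℝ) ^ ((3:ℝ)/2) / Real.sqrt k + (n:ℝ) * Real.sqrt k
      ≤ 4 * (n:ℝ) ^ ((5:ℝ)/4) := by
  set x : ℝ := (n:ℝ) with hxdef
  set a : ℝ := (k:ℝ) with hadef
  have hx2 : (2:ℝ) ≤ x := by rw [hxdef]; exact_mod_cast hn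
  have hx0 : (0:ℝ) < x := by linarith
  have ha1 : (1:ℝ) ≤ a := by rw [hadef]; exact_mod_cast hk1
  have ha0 : (0:ℝ) < a := by linarith
  have haa : a ^ 2 ≤ x := by
    rw [sq, hadef, hxdef]; exact_mod_cast h1
  have hx4 : x ≤ 4 * a ^ 2 := by
    have h2' : x + 1 ≤ (a + 1) ^ 2 := by
      have : x + 1 ≤ ((k+1) * (k+1) : ℕ) := by rw [hxdef]; exact_mod_cast h2
      push_cast at this
      rw [hadef]
      nlinarith
    nlinarith
  have hsa0 : (0:ℝ) < Real.sqrt a := Real.sqrt_pos.mpr ha0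
  have hq : x ^ ((1:ℝ)/4) = Real.sqrt (Real.sqrt x) := by
    rw [show (1:ℝ)/4 = (1/2) * (1/2) by norm_num, Real.rpow_mul hx0.le,
      ← Real.sqrt_eq_rpow, ← Real.sqrt_eq_rpow]
  have h54 : x ^ ((5:ℝ)/4) = x * x ^ ((1:ℝ)/4) := by
    rw [show (5:ℝ)/4 = 1 + 1/4 by norm_num, Real.rpow_add hx0, Real.rpow_one]
  have h32 : x ^ ((3:ℝ)/2) = x ^ ((5:ℝ)/4) * x ^ ((1:ℝ)/4) := by
    rw [← Real.rpow_add hx0]; norm_num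
  have hsqa : Real.sqrt a ≤ x ^ ((1:ℝ)/4) := by
    rw [hq]
    apply Real.sqrt_le_sqrt
    calc a = Real.sqrt (a ^ 2) := (Real.sqrt_sq ha0.le).symm
      _ ≤ Real.sqrt x := Real.sqrt_le_sqrt haa
  have hx14 : x ^ ((1:ℝ)/4) ≤ Real.sqrt 2 * Real.sqrt a := by
    rw [hq, ← Real.sqrt_mul (by norm_num : (0:ℝ) ≤ 2)]
    apply Real.sqrt_le_sqrt
    calc Real.sqrt x ≤ Real.sqrt (4 * a ^ 2) := Real.sqrt_le_sqrt hx4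
      _ = 2 * a := by
          rw [show 4 * a ^ 2 = (2*a)^2 by ring, Real.sqrt_sq (by positivity)]
  have hpow_nonneg : (0:ℝ) ≤ x ^ ((5:ℝ)/4) := Real.rpow_nonneg hx0.le _
  have term2 : x * Real.sqrt a ≤ x ^ ((5:ℝ)/4) := by
    rw [h54]
    exact mul_le_mul_of_nonneg_left hsqa hx0.le
  have term1 : Real.sqrt 3 * x ^ ((3:ℝ)/2) / Real.sqrt a ≤ 3 * x ^ ((5:ℝ)/4) := by
    rw [h32]
    rw [div_le_iff₀ hsa0]
    have hs6 : Real.sqrt 3 * Real.sqrt 2 ≤ 3 := by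
      rw [← Real.sqrt_mul (by norm_num : (0:ℝ) ≤ 3)]
      calc Real.sqrt (3 * 2) ≤ Real.sqrt 9 := Real.sqrt_le_sqrt (by norm_num)
        _ = 3 := by rw [show (9:ℝ) = 3^2 by norm_num, Real.sqrt_sq (by norm_num)]
    calc Real.sqrt 3 * (x ^ ((5:ℝ)/4) * x ^ ((1:ℝ)/4))
        ≤ Real.sqrt 3 * (x ^ ((5:ℝ)/4) * (Real.sqrt 2 * Real.sqrt a)) := by
          apply mul_le_mul_of_nonneg_left _ (Real.sqrt_nonneg 3)
          exact mul_le_mul_of_nonneg_left hx14 hpow_nonneg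
      _ = (Real.sqrt 3 * Real.sqrt 2) * x ^ ((5:ℝ)/4) * Real.sqrt a := by ring
      _ ≤ 3 * x ^ ((5:ℝ)/4) * Real.sqrt a := by
          apply mul_le_mul_of_nonneg_right _ (Real.sqrt_nonneg a)
          exact mul_le_mul_of_nonneg_right hs6 hpow_nonneg
  linarith


lemma small_case {n : ℕ} (hn : n ≤ 1) (M : Matrix (Fin n) (Fin n) ℝ)
    (hdiag : ∀ i j : Fin n, M i j = 0) : nuclearNorm M ≤ 0 := by
  have hr : M.rank ≤ n := by
    calc M.rank ≤ Fintype.card (Fin n) := Matrix.rank_le_card_height M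
      _ = n := Fintype.card_fin n
  have hf : frobeniusNorm M = 0 := by
    rw [frobeniusNorm]
    have : ∑ i, ∑ j, (M i j)^2 = 0 := by
      refine Finset.sum_eq_zero fun i _ => Finset.sum_eq_zero fun j _ => ?_
      rw [hdiag i j]; ring
    rw [this, Real.sqrt_zero]
  calc nuclearNorm M ≤ Real.sqrt n * frobeniusNorm M :=
        nuclearNorm_le_sqrt_mul_frobenius M hr
    _ = 0 := by rw [hf, mul_zero]

end BT

theorem bradleyTerry_nuclearNorm_le :
    ∃ C : ℝ, 0 < C ∧
      ∀ (n : ℕ) (p : Matrix (Fin n) (Fin n) ℝ),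
        (∀ i j, p i j ∈ Set.Icc (0:ℝ) 1) →
        (∀ i j, i ≠ j → p j i = 1 - p i j) →
        ∀ (rk : Fin n → Fin n), Function.Bijective rk →
        (∀ i j l : Fin n, rk j < rk i → l ≠ i → l ≠ j → p j l ≤ p i l) →
        ∀ (M : Matrix (Fin n) (Fin n) ℝ),
          (∀ i j, M i j = if i = j then 0 else p i j) →
          (∀ k : ℕ, 1 ≤ k → k < n →
            nuclearNorm M ≤
              Real.sqrt 3 * (n : ℝ) ^ ((3:ℝ)/2) / Real.sqrt (k : ℝ)
                + (n : ℝ) * Real.sqrt (k : ℝ)) ∧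
          nuclearNorm M ≤ C * (n : ℝ) ^ ((5:ℝ)/4) := by
  refine ⟨4, by norm_num, ?_⟩
  intro n p hp _hskew rk hrk hmono M hM
  constructor
  · intro k hk1 hkn
    exact BT.main_bound p hp rk hrk hmono M hM k hk1 hkn
  · by_cases hn : n ≤ 1
    · have hdiag : ∀ i j : Fin n, M i j = 0 := by
        intro i j
        have hij : i = j := by
          apply Fin.ext
          omega
        rw [hij, hM, if_pos rfl]
      have h0 := BT.small_case hn M hdiag
      have : (0:ℝ) ≤ 4 * (n:ℝ) ^ ((5:ℝ)/4) := by positivity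
      linarith
    · push_neg at hn
      have hn2 : 2 ≤ n := hn
      set k := Nat.sqrt n with hk
      have hk1 : 1 ≤ k := Nat.sqrt_pos.mpr (by omega)
      have hkn : k < n := Nat.sqrt_lt_self (by omega)
      have hb := BT.main_bound p hp rk hrk hmono M hM k hk1 hkn
      have hkk : k * k ≤ n := by
        have := Nat.sqrt_le' n
        nlinarith [this]
      have hks : n < (k+1) * (k+1) := by
        have := Nat.lt_succ_sqrt' n
        nlinarith [this]
      have ha := BT.arith (n := n) (k := k) hn2 hk1 hkk hks
      exact le_trans hb ha
end

section
/- Suppose the entries of an m×n matrix M (with entries in [−1,1]) are observed independently with probability p, and suppose M contains r rows that are each duplicated ⌊m/r⌋ times (so M has rank ≤ r). If the duplicated entries come from i.i.d. Uniform[−1,1] random variables, then for any estimator M̃ that is a function of the observed entries, MSE(M̃) ≥ C·(1−p)^{⌊m/r⌋} for a universal constant C > 0. Specifically: for a single Uniform[−1,1] random variable U observed with probability 1 − (1−p)^{⌊m/r⌋} (i.e., unobserved entirely with probability (1−p)^{⌊m/r⌋}), any estimator Û based on the observations satisfies E(Û − U)² ≥ (1/3)·(1−p)^{⌊m/r⌋}.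 -/
open MeasureTheory ProbabilityTheory

theorem unobserved_uniform_lower_bound (m r : ℕ) (hr : 0 < r) (p : ℝ)
    (hp0 : 0 ≤ p) (hp1 : p ≤ 1)
    {Ω : Type*} [MeasurableSpace Ω] (μ : Measure Ω) [IsProbabilityMeasure μ]
    (U : Ω → ℝ) (hU : Measurable U)
    (hUdist : Measure.map U μ = (2 : ENNReal)⁻¹ • volume.restrict (Set.Icc (-1:ℝ) 1))
    (B : Ω → Bool) (hB : Measurable B)
    (hq : μ {ω | B ω = false} = ENNReal.ofReal ((1 - p) ^ (m / r)))
    (hindep : IndepFun U B μ)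
    (g : Option ℝ → ℝ) :
    ENNReal.ofReal ((1 - p) ^ (m / r) / 3)
      ≤ ∫⁻ ω, ENNReal.ofReal ((g (if B ω then some (U ω) else none) - U ω)^2) ∂μ := by
  set q : ℝ := (1 - p) ^ (m / r) with hqdef
  have hq0 : 0 ≤ q := pow_nonneg (by linarith) _
  set c : ℝ := g none with hc
  -- the two independent nonnegative functions
  set f : Ω → ENNReal := fun ω => ENNReal.ofReal ((c - U ω)^2) with hf
  set h : Ω → ENNReal := fun ω => if B ω then 0 else 1 with hh
  have hφ : Measurable fun x : ℝ => ENNReal.ofReal ((c - x)^2) := by fun_prop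
  have hψ : Measurable fun b : Bool => if b then (0:ENNReal) else 1 :=
    measurable_from_top
  have hfm : Measurable f := hφ.comp hU
  have hhm : Measurable h := hψ.comp hB
  have hind2 : IndepFun f h μ := hindep.comp hφ hψ
  -- pointwise bound
  have hpt : ∀ ω, f ω * h ω ≤
      ENNReal.ofReal ((g (if B ω then some (U ω) else none) - U ω)^2) := by
    intro ω
    by_cases hb : B ω
    · simp [hf, hh, hb]
    · simp only [hf, hh, hb, if_false, mul_one, Bool.not_eq_true] at *
      simp [hb, hc]
  have hmono : ∫⁻ ω, f ω * h ω ∂μ ≤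
      ∫⁻ ω, ENNReal.ofReal ((g (if B ω then some (U ω) else none) - U ω)^2) ∂μ :=
    lintegral_mono hpt
  -- product splits
  have hsplit : ∫⁻ ω, f ω * h ω ∂μ = (∫⁻ ω, f ω ∂μ) * ∫⁻ ω, h ω ∂μ :=
    lintegral_mul_eq_lintegral_mul_lintegral_of_indepFun hfm hhm hind2
  -- ∫ h = μ {B = false}
  have hhval : ∫⁻ ω, h ω ∂μ = ENNReal.ofReal q := by
    have hset : MeasurableSet {ω | B ω = false} := hB (measurableSet_singleton false)
    have : (fun ω => h ω) = Set.indicator {ω | B ω = false} (fun _ => (1:ENNReal)) := by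
      funext ω
      by_cases hb : B ω <;> simp [hh, hb, Set.indicator_apply]
    rw [this, lintegral_indicator hset]
    simp [hq]
  -- compute ∫ f
  have hint : ∫ x in Set.Icc (-1:ℝ) 1, (c - x)^2 = 2*c^2 + 2/3 := by
    rw [MeasureTheory.integral_Icc_eq_integral_Ioc,
      ← intervalIntegral.integral_of_le (by norm_num : (-1:ℝ) ≤ 1)]
    have : ∫ x in (-1:ℝ)..1, (c - x)^2 = ((1-c)^3/3) - ((-1-c)^3/3) := by
      apply intervalIntegral.integral_eq_sub_of_hasDerivAt
        (f := fun x => (x - c)^3 / 3)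
      · intro x _
        have h1 : HasDerivAt (fun x : ℝ => (x - c)^3) (3 * (x - c)^2 * 1) x := by
          exact ((hasDerivAt_id x).sub_const c).pow 3
        have := h1.div_const 3
        refine this.congr_deriv ?_
        ring
      · exact (Continuous.intervalIntegrable (by fun_prop) _ _)
    rw [this]; ring
  have hfval : ∫⁻ ω, f ω ∂μ = ENNReal.ofReal (c^2 + 1/3) := by
    have h1 : ∫⁻ ω, f ω ∂μ = ∫⁻ x, ENNReal.ofReal ((c - x)^2) ∂(Measure.map U μ) :=
      (lintegral_map hφ hU).symm
    rw [h1, hUdist, lintegral_smul_measure]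
    have h2 : ∫⁻ x in Set.Icc (-1:ℝ) 1, ENNReal.ofReal ((c - x)^2) ∂volume
        = ENNReal.ofReal (2*c^2 + 2/3) := by
      rw [← hint, ← ofReal_integral_eq_lintegral_ofReal]
      · exact (Continuous.integrableOn_Icc (by fun_prop))
      · filter_upwards with x using sq_nonneg _
    rw [h2]
    rw [show ((2:ENNReal))⁻¹ = ENNReal.ofReal (1/2) by
      rw [ENNReal.ofReal_div_of_pos (by norm_num)]; norm_num]
    rw [smul_eq_mul, ← ENNReal.ofReal_mul (by norm_num)]
    ring_nf
  -- conclude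
  calc ENNReal.ofReal (q / 3) = ENNReal.ofReal (1/3) * ENNReal.ofReal q := by
        rw [← ENNReal.ofReal_mul (by norm_num)]; ring_nf
    _ ≤ ENNReal.ofReal (c^2 + 1/3) * ENNReal.ofReal q := by
        gcongr
        nlinarith [sq_nonneg c]
    _ = (∫⁻ ω, f ω ∂μ) * ∫⁻ ω, h ω ∂μ := by rw [hfval, hhval]
    _ = ∫⁻ ω, f ω * h ω ∂μ := hsplit.symm
    _ ≤ _ := hmono
end
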